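/- arXiv:1803.05771 — 7 statements merged into one kernel-verified Lean document; each statement's English description precedes it below -/
import Mathlib

section
/- Let θ₀ ∈ (0,1] and define θ_{k+1} = (√(θ_k⁴ + 4θ_k²) − θ_k²)/2. Then for all k ≥ 0, θ_k ≤ 2/(k + 2/θ₀). -/
lemma theta_step (a b : ℝ) (ha : 0 < a)
    (hb : b = (Real.sqrt (a^4 + 4*a^2) - a^2)/2) :
    0 < b ∧ b^2 + a^2*b = a^2 := by
  have hnn : (0:ℝ) ≤ a^4 + 4*a^2 := by positivity
  have hs : Real.sqrt (a^4 + 4*a^2) ^ 2 = a^4 + 4*a^2 := Real.sq_sqrt hnn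
  have hsnn : 0 ≤ Real.sqrt (a^4 + 4*a^2) := Real.sqrt_nonneg _
  have hgt : a^2 < Real.sqrt (a^4 + 4*a^2) := by
    nlinarith [sq_nonneg (Real.sqrt (a^4 + 4*a^2) - a^2), sq_nonneg a]
  constructor
  · rw [hb]; linarith
  · rw [hb]; nlinarith [hs]

theorem theta_upper_bound (th : ℕ → ℝ)
    (h0 : th 0 ∈ Set.Ioc (0:ℝ) 1)
    (hrec : ∀ k, th (k+1) = (Real.sqrt ((th k)^4 + 4*(th k)^2) - (th k)^2)/2) :
    ∀ k : ℕ, th k ≤ 2 / ((k : ℝ) + 2 / th 0) := by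
  obtain ⟨h0pos, _⟩ := h0
  have key : ∀ k : ℕ, 0 < th k ∧ 1 / th 0 + (k:ℝ)/2 ≤ 1 / th k := by
    intro k
    induction k with
    | zero => exact ⟨h0pos, by simp⟩
    | succ n ih =>
      obtain ⟨hapos, hih⟩ := ih
      obtain ⟨hbpos, heq⟩ := theta_step (th n) (th (n+1)) hapos (hrec n)
      set a := th n; set b := th (n+1)
      have hble : b ≤ 1 := by nlinarith
      have hba : b ≤ a := by nlinarith
      have hstep : 1/a + 1/2 ≤ 1/b := by
        rw [div_add_div _ _ (ne_of_gt hapos) two_ne_zero, div_le_div_iff₀ (by positivity) hbpos]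
        nlinarith
      refine ⟨hbpos, ?_⟩
      push_cast
      have : 1 / th 0 + (n:ℝ)/2 + 1/2 ≤ 1/a + 1/2 := by linarith
      linarith
  intro k
  obtain ⟨hpos, hle⟩ := key k
  have hd : 0 < (k:ℝ)/2 + 1/th 0 := by positivity
  have h1 : th k ≤ 1 / (1/th 0 + (k:ℝ)/2) := by
    rw [le_div_iff₀ (by linarith)]
    calc th k * (1/th 0 + (k:ℝ)/2) ≤ th k * (1/th k) := by
          apply mul_le_mul_of_nonneg_left hle (le_of_lt hpos)
      _ = 1 := by field_simp
  calc th k ≤ 1 / (1/th 0 + (k:ℝ)/2) := h1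
    _ = 2 / ((k:ℝ) + 2/th 0) := by
        rw [div_eq_div_iff (by linarith) (by positivity)]
        field_simp
        ring
end

section
/- Let θ₀ ∈ (0,1] and define θ_{k+1} = (√(θ_k⁴ + 4θ_k²) − θ_k²)/2. Then for all k ≥ 0, θ_k ≥ (2−θ₀)/(k + (2−θ₀)/θ₀). -/
theorem theta_lower_bound (th : ℕ → ℝ)
    (h0 : th 0 ∈ Set.Ioc (0:ℝ) 1)
    (hrec : ∀ k, th (k+1) = (Real.sqrt ((th k)^4 + 4*(th k)^2) - (th k)^2)/2) :
    ∀ k : ℕ, (2 - th 0) / ((k : ℝ) + (2 - th 0) / th 0) ≤ th k := by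
  obtain ⟨h0p, h01⟩ := h0
  have key : ∀ k, 0 < th k →
      0 < th (k+1) ∧ (th (k+1))^2 + (th k)^2 * th (k+1) = (th k)^2 := by
    intro k hk
    have h4 : (0:ℝ) < (th k)^4 + 4*(th k)^2 := by positivity
    have hs : Real.sqrt ((th k)^4 + 4*(th k)^2) ^ 2 = (th k)^4 + 4*(th k)^2 :=
      Real.sq_sqrt h4.le
    have hsgt : (th k)^2 < Real.sqrt ((th k)^4 + 4*(th k)^2) := by
      nlinarith [Real.sqrt_nonneg ((th k)^4 + 4*(th k)^2), sq_nonneg (th k)]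
    refine ⟨by rw [hrec k]; linarith, by rw [hrec k]; nlinarith [hs]⟩
  have pos : ∀ k, 0 < th k := by
    intro k; induction k with
    | zero => exact h0p
    | succ n ih => exact (key n ih).1
  have lt1 : ∀ k, th (k+1) < 1 := by
    intro k
    have h := (key k (pos k)).2
    nlinarith [pos (k+1), pos k, sq_nonneg (th (k+1))]
  have dec : ∀ k, th (k+1) ≤ th k := by
    intro k
    have h := (key k (pos k)).2
    nlinarith [pos (k+1), pos k, lt1 k]
  have le0 : ∀ k, th k ≤ th 0 := by
    intro k; induction k with
    | zero => exact le_refl _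
    | succ n ih => exact (dec n).trans ih
  have ratio : ∀ k, (1 - th 0) * th k ≤ th (k+1) := by
    intro k
    have h := (key k (pos k)).2
    nlinarith [pos k, pos (k+1), le0 k, mul_pos (pos k) (pos k),
      mul_pos (pos k) (pos (k+1)), sq_nonneg (th k)]
  set c : ℝ := 2 - th 0 with hc
  have hcpos : 0 < c := by simp only [hc]; linarith
  intro k
  induction k with
  | zero =>
    have : c / ((0:ℕ) + c / th 0) = th 0 := by
      push_cast
      rw [zero_add]
      field_simp
    rw [this]
  | succ k ih =>
    set a := th k with ha
    set b := th (k+1) with hb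
    set d : ℝ := (k:ℝ) + c / th 0 with hd
    have hdpos : 0 < d := by
      have : 0 < c / th 0 := div_pos hcpos h0p
      have : (0:ℝ) ≤ (k:ℝ) := Nat.cast_nonneg k
      simp only [hd]; linarith
    have had : c ≤ a * d := (div_le_iff₀ hdpos).mp ih
    have hrel := (key k (pos k)).2
    have hap := pos k
    have hbp := pos (k+1)
    -- step1 : c * a ≤ a + b
    have step1 : c * a ≤ a + b := by
      have := ratio k
      simp only [hc]; nlinarith
    -- hq : c * a ≤ b * (c + a)
    have hq : c * a ≤ b * (c + a) := by
      nlinarith [mul_le_mul_of_nonneg_right step1 (mul_pos hap hbp).le,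
        mul_pos hap hbp, hrel, mul_pos hap hap]
    have hcap : 0 < c + a := by linarith
    have hgoal : c ≤ b * (d + 1) := by
      nlinarith [mul_le_mul_of_nonneg_right hq (by linarith : (0:ℝ) ≤ d + 1),
        mul_le_mul_of_nonneg_left had hcpos.le, hcap, hbp]
    have hq0 : 0 < c / th 0 := div_pos hcpos h0p
    have hk0 : (0:ℝ) ≤ (k:ℝ) := Nat.cast_nonneg k
    push_cast
    rw [div_le_iff₀ (by linarith : (0:ℝ) < (k:ℝ) + 1 + c / th 0)]
    calc c ≤ b * (d + 1) := hgoal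
      _ = b * ((k:ℝ) + 1 + c / th 0) := by rw [hd]; ring
end

section
/- Let F : ℝⁿ → ℝ ∪ {+∞} be a proper convex function with nonempty optimal set X* and optimal value F*. Suppose there exist μ > 0, a positive weight vector v, and r > 0 such that F(x) ≥ F* + (μ/2)·dist_v(x, X*)² for all x with F(x) − F* ≤ r. Then for every M ≥ 1 and every y with r ≤ F(y) − F* ≤ Mr, one has F(y) ≥ F* + (μ/(2M))·dist_v(y, X*)². -/
/-- Weighted distance of `x` to the set `S`, with respect to the weighted
Euclidean norm `‖x‖_v² = ∑ i, v i * (x i)²`. -/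
noncomputable def wdist (n : ℕ) (v x : Fin n → ℝ) (S : Set (Fin n → ℝ)) : ℝ :=
  sInf ((fun p => Real.sqrt (∑ i, v i * (x i - p i)^2)) '' S)

set_option maxHeartbeats 1000000 in
theorem local_error_bound_extends (n : ℕ) (F : (Fin n → ℝ) → ℝ)
    (Xs : Set (Fin n → ℝ)) (Fstar : ℝ)
    (hconv : ConvexOn ℝ Set.univ F)
    (hXs : Xs.Nonempty)
    (hXopt : ∀ x ∈ Xs, F x = Fstar)
    (hFstar : ∀ x, Fstar ≤ F x)
    (μ r : ℝ) (hμ : 0 < μ) (hr : 0 < r)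
    (v : Fin n → ℝ) (hv : ∀ i, 0 < v i)
    (heb : ∀ x, F x - Fstar ≤ r → Fstar + μ/2 * (wdist n v x Xs)^2 ≤ F x)
    (M : ℝ) (hM : 1 ≤ M)
    (y : Fin n → ℝ) (hy1 : r ≤ F y - Fstar) (hy2 : F y - Fstar ≤ M * r) :
    Fstar + μ/(2*M) * (wdist n v y Xs)^2 ≤ F y := by
  -- the scaled embedding into Euclidean space
  set e : (Fin n → ℝ) → EuclideanSpace ℝ (Fin n) := fun x => WithLp.toLp 2 (fun i => Real.sqrt (v i) * x i) with he
  have hNe : ∀ a b : Fin n → ℝ,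
      Real.sqrt (∑ i, v i * (a i - b i)^2) = ‖e a - e b‖ := by
    intro a b
    rw [EuclideanSpace.norm_eq]
    congr 1
    apply Finset.sum_congr rfl
    intro i _
    have h1 : (e a - e b) i = Real.sqrt (v i) * (a i - b i) := by
      have : (e a - e b) i = Real.sqrt (v i) * a i - Real.sqrt (v i) * b i := rfl
      rw [this]; ring
    rw [h1, Real.norm_eq_abs, sq_abs, mul_pow, Real.sq_sqrt (hv i).le]
  have hwd : ∀ x : Fin n → ℝ,
      wdist n v x Xs = sInf ((fun q => ‖e x - e q‖) '' Xs) := by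
    intro x
    unfold wdist
    congr 1
    apply Set.image_congr
    intro q _
    exact hNe x q
  have hbdd : ∀ x : Fin n → ℝ, BddBelow ((fun q => ‖e x - e q‖) '' Xs) := by
    intro x
    exact ⟨0, by rintro b ⟨q, hq, rfl⟩; exact norm_nonneg _⟩
  set d := wdist n v y Xs with hd
  have hd0 : 0 ≤ d := by
    rw [hd, hwd]
    apply Real.sInf_nonneg
    rintro b ⟨q, hq, rfl⟩
    exact norm_nonneg _
  set c : ℝ := F y - Fstar with hc
  have hc0 : 0 < c := lt_of_lt_of_le hr hy1
  have hM0 : 0 < M := lt_of_lt_of_le one_pos hM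
  set t : ℝ := r / c with ht
  have ht0 : 0 < t := div_pos hr hc0
  have ht1 : t ≤ 1 := by
    rw [ht, div_le_one hc0]; exact hy1
  have htc : t * c = r := div_mul_cancel₀ r (ne_of_gt hc0)
  have htM : 1 / M ≤ t := by
    rw [ht, div_le_div_iff₀ hM0 hc0]
    nlinarith
  -- main estimate: t * d ≤ sqrt (2*r/μ)
  have hrμ : (0:ℝ) ≤ 2 * r / μ := by positivity
  have key : t * d ≤ Real.sqrt (2 * r / μ) := by
    apply le_of_forall_pos_le_add
    intro ε hε
    -- pick an approximate projection p of y
    obtain ⟨b, hbmem, hblt⟩ :=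
      Real.lt_sInf_add_pos (s := (fun q => ‖e y - e q‖) '' Xs)
        (hXs.image _) hε
    obtain ⟨p, hp, rfl⟩ := hbmem
    rw [← hwd, ← hd] at hblt
    -- the intermediate point
    set xt : Fin n → ℝ := (1 - t) • p + t • y with hxt
    have hFxt : F xt ≤ (1 - t) * F p + t * F y :=
      hconv.2 (Set.mem_univ p) (Set.mem_univ y) (by linarith) ht0.le (by ring)
    have hFxt' : F xt - Fstar ≤ r := by
      have := hXopt p hp
      have : F xt - Fstar ≤ t * c := by rw [hc]; nlinarith
      linarith [htc, this]
    have hw := heb xt hFxt'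
    set w := wdist n v xt Xs with hwdef
    have hw2 : w ^ 2 ≤ 2 * r / μ := by
      rw [le_div_iff₀ hμ]; nlinarith
    have hwle : w ≤ Real.sqrt (2 * r / μ) := by
      calc w ≤ |w| := le_abs_self w
        _ = Real.sqrt (w ^ 2) := (Real.sqrt_sq_eq_abs w).symm
        _ ≤ Real.sqrt (2 * r / μ) := Real.sqrt_le_sqrt hw2
    -- lower bound on w
    have heyxt : ‖e y - e xt‖ = (1 - t) * ‖e y - e p‖ := by
      have h2 : e y - e xt = (1 - t) • (e y - e p) := by
        ext i
        have hL : (e y - e xt) i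
            = Real.sqrt (v i) * y i
              - Real.sqrt (v i) * ((1 - t) * p i + t * y i) := rfl
        have hR : ((1 - t) • (e y - e p)) i
            = (1 - t) * (Real.sqrt (v i) * y i - Real.sqrt (v i) * p i) := rfl
        rw [hL, hR]; ring
      rw [h2, norm_smul, Real.norm_eq_abs, abs_of_nonneg (by linarith : (0:ℝ) ≤ 1 - t)]
    have hwlb : t * d - ε ≤ w := by
      rw [hwdef, hwd]
      apply le_csInf (hXs.image _)
      rintro b ⟨q, hq, rfl⟩
      have h3 : ‖e y - e q‖ - ‖e y - e xt‖ ≤ ‖e xt - e q‖ := by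
        have h4 : (e y - e q) - (e y - e xt) = e xt - e q := by abel
        calc ‖e y - e q‖ - ‖e y - e xt‖ ≤ ‖(e y - e q) - (e y - e xt)‖ :=
              norm_sub_norm_le _ _
          _ = ‖e xt - e q‖ := by rw [h4]
      have h5 : d ≤ ‖e y - e q‖ := by
        rw [hd, hwd]
        exact csInf_le (hbdd y) (Set.mem_image_of_mem _ hq)
      have h6 : (1 - t) * ‖e y - e p‖ ≤ (1 - t) * (d + ε) :=
        mul_le_mul_of_nonneg_left hblt.le (by linarith)
      nlinarith [mul_nonneg ht0.le hε.le]
    linarith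
  -- conclude
  have hsq : (t * d) ^ 2 ≤ 2 * r / μ := by
    calc (t * d) ^ 2 ≤ Real.sqrt (2 * r / μ) ^ 2 := by
          apply pow_le_pow_left₀ (mul_nonneg ht0.le hd0) key
      _ = 2 * r / μ := Real.sq_sqrt hrμ
  have h7 : μ / 2 * (t * d) ^ 2 ≤ r := by
    calc μ / 2 * (t * d) ^ 2 ≤ μ / 2 * (2 * r / μ) := by
          apply mul_le_mul_of_nonneg_left hsq (by positivity)
      _ = r := by field_simp
  have h8 : μ / 2 * t * d ^ 2 ≤ c := by
    have h7' : (μ / 2 * t * d ^ 2) * t ≤ c * t := by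
      calc (μ / 2 * t * d ^ 2) * t = μ / 2 * (t * d) ^ 2 := by ring
        _ ≤ r := h7
        _ = t * c := htc.symm
        _ = c * t := by ring
    exact le_of_mul_le_mul_right h7' ht0
  have h9 : μ / (2 * M) * d ^ 2 ≤ μ / 2 * t * d ^ 2 := by
    apply mul_le_mul_of_nonneg_right _ (sq_nonneg d)
    rw [div_le_iff₀ (by positivity)]
    calc μ = μ / 2 * (1 / M) * (2 * M) := by field_simp
      _ ≤ μ / 2 * t * (2 * M) := by
          apply mul_le_mul_of_nonneg_right _ (by positivity)
          exact mul_le_mul_of_nonneg_left htM (by positivity)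
  rw [hc] at h8
  linarith
end

section
/- Let θ₀ ∈ (0,1], μ > 0, α ∈ (0,1), and let (θ_k) be the sequence defined by θ_{k+1} = (√(θ_k⁴ + 4θ_k²) − θ_k²)/2. If k ≥ (2/θ₀)·(√((1+μ)/(αμ)) − 1) + 1, then θ_{k−1}²·((1−θ₀)/θ₀² + 1/(θ₀²μ)) ≤ α. -/
set_option maxHeartbeats 800000

lemma step_aux (a b : ℝ) (hb : 0 < b) (hab : b ≤ a) (h : a^2 = b^2 + a) :
    b + 1/2 ≤ a := by
  nlinarith [sq_nonneg (a - b), mul_pos hb hb]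

theorem contraction_for_long_enough_period (t0 μ α : ℝ)
    (ht0 : t0 ∈ Set.Ioc (0:ℝ) 1) (hμ : 0 < μ) (hα : α ∈ Set.Ioo (0:ℝ) 1)
    (th : ℕ → ℝ) (h0 : th 0 = t0)
    (hrec : ∀ k, th (k+1) = (Real.sqrt ((th k)^4 + 4*(th k)^2) - (th k)^2)/2)
    (k : ℕ) (hk1 : 1 ≤ k)
    (hk : (2/t0) * (Real.sqrt ((1+μ)/(α*μ)) - 1) + 1 ≤ (k : ℝ)) :
    (th (k-1))^2 * ((1 - t0)/t0^2 + 1/(t0^2*μ)) ≤ α := by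
  obtain ⟨ht0p, ht0le⟩ := ht0
  obtain ⟨hαp, hαlt⟩ := hα
  have hbound : ∀ n, 0 < th n ∧ th n ≤ 1 ∧ 1/t0 + n/2 ≤ 1/(th n) := by
    intro n
    induction n with
    | zero => refine ⟨by rw [h0]; exact ht0p, by rw [h0]; exact ht0le, by simp [h0]⟩
    | succ n ih =>
      obtain ⟨hp, hle, hinv⟩ := ih
      have hsq : (Real.sqrt ((th n)^4 + 4*(th n)^2))^2 = (th n)^4 + 4*(th n)^2 :=
        Real.sq_sqrt (by positivity)
      have hquad : (th (n+1))^2 = (th n)^2 * (1 - th (n+1)) := by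
        rw [hrec n]; nlinarith [hsq]
      have hpos' : 0 < th (n+1) := by
        rw [hrec n]
        have hlt : (th n)^2 < Real.sqrt ((th n)^4 + 4*(th n)^2) := by
          nlinarith [hsq, Real.sqrt_nonneg ((th n)^4 + 4*(th n)^2), sq_nonneg (th n), hp]
        linarith
      have hlt1 : th (n+1) < 1 := by nlinarith [hquad, hp, hpos']
      have hlet : th (n+1) ≤ th n := by nlinarith [hquad, hp, hpos']
      have hinv2 : (1/(th (n+1)))^2 = (1/(th n))^2 + 1/(th (n+1)) := by
        field_simp
        nlinarith [hquad]
      have hab : 1/(th n) ≤ 1/(th (n+1)) := one_div_le_one_div_of_le hpos' hlet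
      have hbpos : 0 < 1/(th n) := by positivity
      have hstep := step_aux (1/(th (n+1))) (1/(th n)) hbpos hab hinv2
      refine ⟨hpos', le_of_lt hlt1, ?_⟩
      push_cast
      linarith
  obtain ⟨hp, hle, hinv⟩ := hbound (k - 1)
  have hcast : ((k - 1 : ℕ) : ℝ) = (k : ℝ) - 1 := by
    have := Nat.cast_sub hk1 (R := ℝ); simpa using this
  rw [hcast] at hinv
  set θ := th (k - 1) with hθ
  set R := (1 + μ)/(α * μ) with hRdef
  have hRpos : 0 < R := by positivity
  have hsR : (Real.sqrt R)^2 = R := Real.sq_sqrt (le_of_lt hRpos)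
  have hsRnn : 0 ≤ Real.sqrt R := Real.sqrt_nonneg R
  -- 1/θ ≥ √R / t0
  have h1 : Real.sqrt R / t0 ≤ 1/θ := by
    have e1 : (2/t0) * (Real.sqrt R - 1) = 2 * ((Real.sqrt R - 1)/t0) := by ring
    have e2 : Real.sqrt R / t0 = 1/t0 + (Real.sqrt R - 1)/t0 := by ring
    rw [e2]
    linarith [hk, hinv]
  -- θ * √R ≤ t0
  have h3 : θ * Real.sqrt R ≤ t0 := by
    rw [div_le_div_iff₀ ht0p hp] at h1
    nlinarith [h1]
  -- θ² * R ≤ t0²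
  have h4 : θ^2 * R ≤ t0^2 := by
    have hmm := mul_self_le_mul_self (mul_nonneg hp.le hsRnn) h3
    have he : θ^2 * R = (θ * Real.sqrt R) * (θ * Real.sqrt R) := by
      rw [show (θ * Real.sqrt R) * (θ * Real.sqrt R) = θ^2 * (Real.sqrt R)^2 from by ring, hsR]
    calc θ^2 * R = (θ * Real.sqrt R) * (θ * Real.sqrt R) := he
      _ ≤ t0 * t0 := hmm
      _ = t0^2 := by ring
  -- finish
  have hC : (1 - t0)/t0^2 + 1/(t0^2*μ) ≤ (1 + μ)/(t0^2 * μ) := by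
    rw [div_add_div _ _ (by positivity) (by positivity), div_le_div_iff₀ (by positivity) (by positivity)]
    nlinarith [mul_nonneg (pow_nonneg ht0p.le 5) (sq_nonneg μ), ht0p, hμ]
  have hθ2 : θ^2 ≤ t0^2 * α * μ / (1 + μ) := by
    rw [hRdef] at h4
    rw [le_div_iff₀ (by positivity : (0:ℝ) < 1 + μ)]
    have hαμ : 0 < α * μ := by positivity
    calc θ^2 * (1 + μ) = θ^2 * ((1+μ)/(α*μ)) * (α * μ) := by field_simp
    _ ≤ t0^2 * (α * μ) := by
        apply mul_le_mul_of_nonneg_right h4 (le_of_lt hαμ)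
    _ = t0^2 * α * μ := by ring
  have hCnn : 0 ≤ (1 - t0)/t0^2 + 1/(t0^2*μ) := by
    have ha : 0 ≤ (1 - t0)/t0^2 := div_nonneg (by linarith) (by positivity)
    have hb : 0 ≤ 1/(t0^2*μ) := by positivity
    linarith
  calc θ^2 * ((1 - t0)/t0^2 + 1/(t0^2*μ))
      ≤ θ^2 * ((1 + μ)/(t0^2 * μ)) := mul_le_mul_of_nonneg_left hC (sq_nonneg θ)
    _ ≤ (t0^2 * α * μ / (1 + μ)) * ((1 + μ)/(t0^2 * μ)) := by
        apply mul_le_mul_of_nonneg_right hθ2 (by positivity)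
    _ = α := by field_simp
end

section
/- Fix K₀ ∈ ℕ \ {0}, K* ∈ ℕ, and let (K_r) satisfy the variable restart schedule assumption: K_{2^j − 1} = 2^j K₀ for all j, and |{0 ≤ r < 2^J − 1 : K_r = 2^j K₀}| = 2^{J−1−j} for all j < J. Let i = ⌈max(log₂(K*/K₀), 0)⌉. Then the number of indices r ≤ 2^J − 1 with K_r ≥ 2^i K₀ is exactly 2^{J−i} (counting the final index r = 2^J − 1). -/
open Finset

lemma geom_aux' (i : ℕ) : ∀ J, i ≤ J → ∑ j ∈ Finset.Ico i J, 2^(J-1-j) = 2^(J-i) - 1 := by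
  intro J
  induction J with
  | zero =>
    intro h
    interval_cases i
    simp
  | succ J ih =>
    intro h
    rcases Nat.lt_or_ge i (J+1) with h' | h'
    · have hiJ : i ≤ J := Nat.lt_succ_iff.mp h'
      rw [Finset.sum_Ico_succ_top hiJ]
      have hstep : ∑ j ∈ Finset.Ico i J, 2^(J+1-1-j) = 2 * ∑ j ∈ Finset.Ico i J, 2^(J-1-j) := by
        rw [Finset.mul_sum]
        apply Finset.sum_congr rfl
        intro j hj
        rw [Finset.mem_Ico] at hj
        have hj' : J + 1 - 1 - j = (J - 1 - j) + 1 := by omega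
        rw [hj', pow_succ]
        ring
      rw [hstep, ih hiJ]
      have h1 : 1 ≤ 2^(J-i) := Nat.one_le_two_pow
      have h2 : J + 1 - i = (J - i) + 1 := by omega
      have h3 : J + 1 - 1 - J = 0 := by omega
      rw [h2, h3, pow_succ, pow_zero]
      omega
    · have : i = J + 1 := by omega
      subst this
      simp

theorem variable_restart_count_long_periods (K0 Kstar : ℕ)
    (hK0 : 1 ≤ K0) (hKstar : 1 ≤ Kstar) (K : ℕ → ℕ)
    (h1 : ∀ j : ℕ, K (2^j - 1) = 2^j * K0)
    (h2 : ∀ J : ℕ, ∀ j < J,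
      ((Finset.range (2^J - 1)).filter (fun r => K r = 2^j * K0)).card = 2^(J-1-j))
    (i : ℕ) (hi : i = ⌈max (Real.logb 2 ((Kstar : ℝ) / (K0 : ℝ))) 0⌉₊)
    (J : ℕ) (hiJ : i ≤ J) :
    ((Finset.range (2^J)).filter (fun r => 2^i * K0 ≤ K r)).card = 2^(J-i) := by
  clear hi hKstar
  set N := 2^J - 1 with hN
  set S : ℕ → Finset ℕ := fun j => (Finset.range N).filter (fun r => K r = 2^j * K0) with hS
  have hdisj : ∀ j1 ∈ Finset.range J, ∀ j2 ∈ Finset.range J, j1 ≠ j2 → Disjoint (S j1) (S j2) := by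
    intro j1 _ j2 _ hne
    rw [Finset.disjoint_left]
    intro r hr1 hr2
    simp only [hS, Finset.mem_filter] at hr1 hr2
    apply hne
    have heq : 2^j1 * K0 = 2^j2 * K0 := hr1.2 ▸ hr2.2
    have : (2:ℕ)^j1 = 2^j2 := Nat.eq_of_mul_eq_mul_right hK0 heq
    exact Nat.pow_right_injective (le_refl 2) this
  have hcardS : ∀ j < J, (S j).card = 2^(J-1-j) := fun j hj => h2 J j hj
  have hU : (Finset.range J).biUnion S = Finset.range N := by
    apply Finset.eq_of_subset_of_card_le
    · intro r hr
      simp only [Finset.mem_biUnion, hS, Finset.mem_filter] at hr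
      obtain ⟨j, _, hr, _⟩ := hr
      exact hr
    · rw [Finset.card_biUnion hdisj, Finset.card_range]
      have : ∑ j ∈ Finset.range J, (S j).card = ∑ j ∈ Finset.Ico 0 J, 2^(J-1-j) := by
        rw [Finset.range_eq_Ico]
        exact Finset.sum_congr rfl (fun j hj => hcardS j (Finset.mem_Ico.mp hj).2)
      rw [this, geom_aux' 0 J (Nat.zero_le J)]
      simp [hN]
  have key : (Finset.range N).filter (fun r => 2^i * K0 ≤ K r) = (Finset.Ico i J).biUnion S := by
    ext r
    simp only [Finset.mem_filter, Finset.mem_biUnion, Finset.mem_Ico]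
    constructor
    · rintro ⟨hrN, hrle⟩
      have : r ∈ (Finset.range J).biUnion S := hU ▸ hrN
      simp only [Finset.mem_biUnion, Finset.mem_range] at this
      obtain ⟨j, hjJ, hrj⟩ := this
      refine ⟨j, ⟨?_, hjJ⟩, hrj⟩
      simp only [hS, Finset.mem_filter] at hrj
      have : 2^i * K0 ≤ 2^j * K0 := hrj.2 ▸ hrle
      have hpow : (2:ℕ)^i ≤ 2^j := Nat.le_of_mul_le_mul_right this hK0
      exact (Nat.pow_le_pow_iff_right (by norm_num)).mp hpow
    · rintro ⟨j, ⟨hij, hjJ⟩, hrj⟩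
      simp only [hS, Finset.mem_filter] at hrj
      refine ⟨hrj.1, ?_⟩
      rw [hrj.2]
      exact Nat.mul_le_mul_right K0 (Nat.pow_le_pow_right (by norm_num) hij)
  have hcardfilter : ((Finset.range N).filter (fun r => 2^i * K0 ≤ K r)).card = 2^(J-i) - 1 := by
    rw [key, Finset.card_biUnion (fun j1 hj1 j2 hj2 hne =>
      hdisj j1 (Finset.mem_range.mpr (Finset.mem_Ico.mp hj1).2)
            j2 (Finset.mem_range.mpr (Finset.mem_Ico.mp hj2).2) hne)]
    rw [Finset.sum_congr rfl (fun j hj => hcardS j (Finset.mem_Ico.mp hj).2)]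
    exact geom_aux' i J hiJ
  have h2J : 2^J = N + 1 := by
    have : 1 ≤ 2^J := Nat.one_le_two_pow
    omega
  rw [h2J, Finset.range_add_one, Finset.filter_insert]
  have hNmem : 2^i * K0 ≤ K N := by
    rw [hN, h1 J]
    exact Nat.mul_le_mul_right K0 (Nat.pow_le_pow_right (by norm_num) hiJ)
  rw [if_pos hNmem, Finset.card_insert_of_notMem (by simp [Finset.mem_filter]), hcardfilter]
  have : 1 ≤ 2^(J-i) := Nat.one_le_two_pow
  omega
end

section
/- Let θ₀ ∈ (0,1] and let (θ_k) be the APPROX momentum sequence (θ_{k+1}² = θ_k²(1 − θ_{k+1})). Then the rate factor ρ_K = (1 + (1−θ₀)μ)/(1 + θ₀²μ/(2θ_{K−1}²)) is strictly less than 1 whenever 2θ_{K−1}² < θ₀²/(1 − θ₀); in particular this holds for all K ≥ 1/θ₀. -/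
lemma step_facts (a : ℝ) (ha : 0 < a) :
    0 < (Real.sqrt (a^4 + 4*a^2) - a^2)/2 ∧
    ((Real.sqrt (a^4 + 4*a^2) - a^2)/2)^2
      = a^2 * (1 - (Real.sqrt (a^4 + 4*a^2) - a^2)/2) := by
  have hnn : (0:ℝ) ≤ a^4 + 4*a^2 := by positivity
  have hs : (Real.sqrt (a^4 + 4*a^2))^2 = a^4 + 4*a^2 := Real.sq_sqrt hnn
  have hgt : a^2 < Real.sqrt (a^4 + 4*a^2) := by
    nlinarith [Real.sqrt_nonneg (a^4 + 4*a^2), sq_nonneg (Real.sqrt (a^4+4*a^2) - a^2)]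
  constructor
  · linarith
  · nlinarith

theorem rate_strict_contraction (t0 μ : ℝ)
    (ht0 : t0 ∈ Set.Ioc (0:ℝ) 1) (hμ : 0 < μ)
    (th : ℕ → ℝ) (h0 : th 0 = t0)
    (hrec : ∀ k, th (k+1) = (Real.sqrt ((th k)^4 + 4*(th k)^2) - (th k)^2)/2)
    (K : ℕ) (hK : 1 ≤ K) :
    (2 * (th (K-1))^2 < t0^2 / (1 - t0) →
      (1 + (1 - t0)*μ) / (1 + t0^2*μ/(2*(th (K-1))^2)) < 1) ∧
    (1/t0 ≤ (K : ℝ) →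
      (1 + (1 - t0)*μ) / (1 + t0^2*μ/(2*(th (K-1))^2)) < 1) := by
  obtain ⟨ht0p, ht0le⟩ := ht0
  -- positivity of th
  have hpos : ∀ k, 0 < th k := by
    intro k
    induction k with
    | zero => rw [h0]; exact ht0p
    | succ n ih => rw [hrec n]; exact (step_facts _ ih).1
  have hrec2 : ∀ k, (th (k+1))^2 = (th k)^2 * (1 - th (k+1)) := by
    intro k
    rw [hrec k]; exact (step_facts _ (hpos k)).2
  have hlt1 : ∀ k, th (k+1) < 1 := by
    intro k
    have h2 := hrec2 k
    have := hpos (k+1)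
    have hk := hpos k
    nlinarith [sq_nonneg (th (k+1))]
  -- lambda bound
  have hlam : ∀ k : ℕ, 1/t0 + (k:ℝ)/2 ≤ 1/(th k) := by
    intro k
    induction k with
    | zero => simp [h0]
    | succ n ih =>
      have ha := hpos n
      have hb := hpos (n+1)
      have hb1 := hlt1 n
      have h2 := hrec2 n
      -- 1/th(n+1) ≥ 1/th n + 1/2
      have key : 1/(th n) + 1/2 ≤ 1/(th (n+1)) := by
        rw [div_add_div _ _ (ne_of_gt ha) (by norm_num), div_le_div_iff₀ (by positivity) hb]
        nlinarith [sq_nonneg (th (n+1)), mul_pos ha hb]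
      push_cast
      calc 1/t0 + ((n:ℝ)+1)/2 = (1/t0 + (n:ℝ)/2) + 1/2 := by ring
        _ ≤ 1/(th n) + 1/2 := by linarith
        _ ≤ 1/(th (n+1)) := key
  -- core lemma
  set θ := th (K-1) with hθ
  have hθp : 0 < θ := hpos _
  have core : 2*θ^2*(1-t0) < t0^2 →
      (1 + (1 - t0)*μ) / (1 + t0^2*μ/(2*θ^2)) < 1 := by
    intro h
    rw [div_lt_one (by positivity)]
    have : (1-t0)*μ < t0^2*μ/(2*θ^2) := by
      rw [lt_div_iff₀ (by positivity)]
      nlinarith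
    linarith
  constructor
  · intro h
    apply core
    rcases eq_or_lt_of_le ht0le with heq | hlt
    · exfalso
      rw [← heq] at h
      simp at h
      nlinarith
    · have h1t : 0 < 1 - t0 := by linarith
      rw [lt_div_iff₀ h1t] at h
      nlinarith
  · intro hKt
    apply core
    -- 1/θ ≥ 1/t0 + (K-1)/2 ≥ 3/(2t0) - 1/2
    have hl := hlam (K-1)
    have hKc : ((K-1:ℕ):ℝ) = (K:ℝ) - 1 := by
      push_cast [Nat.cast_sub hK]; ring
    rw [hKc] at hl
    have hL : 3/(2*t0) - 1/2 ≤ 1/θ := by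
      have h1 : 1/(2*t0) - 1/2 ≤ ((K:ℝ)-1)/2 := by
        have e : 1/(2*t0) = (1/t0)/2 := by field_simp
        rw [e]; linarith
      have : 1/t0 + (1/(2*t0) - 1/2) = 3/(2*t0) - 1/2 := by field_simp; ring
      linarith
    have hmul : 3*θ - t0*θ ≤ 2*t0 := by
      have h2 : (3/(2*t0) - 1/2) * (2*t0*θ) ≤ (1/θ) * (2*t0*θ) := by
        apply mul_le_mul_of_nonneg_right hL (by positivity)
      have e1 : (3/(2*t0) - 1/2) * (2*t0*θ) = 3*θ - t0*θ := by field_simp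
      have e2 : (1/θ) * (2*t0*θ) = 2*t0 := by field_simp
      linarith [e1 ▸ e2 ▸ h2]
    nlinarith [sq_nonneg (1+t0), mul_pos hθp hθp, sq_nonneg ((3-t0)*θ - 2*t0), mul_pos ht0p hθp]
end

section
/- Let θ₀ ∈ (0,1), μ > 0, and θ_K ≤ θ_{K−1} ≤ θ₀ with all θ's in (0,1). Then (1−θ_K)·(1 + (θ₀μ/θ_K)(1−θ₀))·(1 + θ₀²μ/(2θ_K²)) + θ_K·(1 + θ₀²μ/(2θ_K²))·(1 + θ₀²μ/(2θ_{K−1}²)) ≤ (1 + θ₀²μ/(2θ_{K−1}²))·(1 + θ₀μ/θ_K), provided θ_{K−1}² = θ_K²/(1−θ_K). -/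
theorem rate_inductive_step (t0 μ tK tKm1 : ℝ)
    (ht0 : t0 ∈ Set.Ioo (0:ℝ) 1) (hμ : 0 < μ)
    (htK : tK ∈ Set.Ioo (0:ℝ) 1) (htKm1 : tKm1 ∈ Set.Ioo (0:ℝ) 1)
    (hle : tK ≤ tKm1) (hle0 : tKm1 ≤ t0)
    (hrel : tKm1^2 = tK^2 / (1 - tK)) :
    (1 - tK) * (1 + (t0*μ/tK) * (1 - t0)) * (1 + t0^2*μ/(2*tK^2))
      + tK * (1 + t0^2*μ/(2*tK^2)) * (1 + t0^2*μ/(2*tKm1^2))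
      ≤ (1 + t0^2*μ/(2*tKm1^2)) * (1 + t0*μ/tK) := by
  obtain ⟨h01, h02⟩ := ht0
  obtain ⟨hK1, hK2⟩ := htK
  obtain ⟨hm1, hm2⟩ := htKm1
  have h1K : (0:ℝ) < 1 - tK := by linarith
  have hb2 : tKm1^2 * (1 - tK) = tK^2 := by
    rw [hrel]; field_simp
  have hKne : tK ≠ 0 := ne_of_gt hK1
  have hmne : tKm1 ≠ 0 := ne_of_gt hm1
  rw [← sub_nonneg]
  have key : (1 + t0^2*μ/(2*tKm1^2)) * (1 + t0*μ/tK)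
      - ((1 - tK) * (1 + (t0*μ/tK) * (1 - t0)) * (1 + t0^2*μ/(2*tK^2))
        + tK * (1 + t0^2*μ/(2*tK^2)) * (1 + t0^2*μ/(2*tKm1^2)))
      = t0*μ*(2-t0)/2 + (1-tK)*t0^4*μ^2/(4*tK^3) := by
    rw [hrel]
    field_simp
    ring
  rw [key]
  have h2 : 0 ≤ (1-tK)*t0^4*μ^2/(4*tK^3) :=
    div_nonneg (mul_nonneg (mul_nonneg h1K.le (by positivity)) (by positivity)) (by positivity)
  have h3 : 0 ≤ t0*μ*(2-t0)/2 := by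
    have : 0 ≤ t0*μ*(2-t0) := mul_nonneg (by positivity) (by linarith)
    linarith
  linarith
end
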